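/- Let f(x) = a x^2 + b x + c be a primitive quadratic integer polynomial with D = b^2 - 4ac, k ≥ 1 an integer with D ≠ a^2 i^2 for all 1 ≤ i ≤ k, and B_k = lcm_{1 ≤ i ≤ k}{i(a^2 i^2 - D)}. Then g_{k,f}(n + B_k) = g_{k,f}(n) for all positive integers n for which all of f(n+i) and f(n+B_k+i), 0 ≤ i ≤ k, are nonzero; i.e., g_{k,f} is eventually periodic with period B_k. -/

import Mathlib

open Finset

private lemma sumS_eq {S : Finset ℕ} (hS : S.Nonempty) (β : ℕ) (v : ℕ → ℕ)
    (hge : ∀ i ∈ S, β ≤ v i)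
    (hpair : ∀ i ∈ S, ∀ j ∈ S, i ≠ j → v i ≤ β ∨ v j ≤ β) :
    ∑ i ∈ S, v i = β * (S.card - 1) + S.sup v := by
  obtain ⟨i₀, hi₀, hmax⟩ := Finset.exists_mem_eq_sup S hS v
  have hothers : ∀ j ∈ S, j ≠ i₀ → v j = β := by
    intro j hj hji
    rcases hpair j hj i₀ hi₀ hji with h | h
    · exact le_antisymm h (hge j hj)
    · have h1 : v j ≤ S.sup v := Finset.le_sup hj
      rw [hmax] at h1
      exact le_antisymm (h1.trans h) (hge j hj)
  rw [← Finset.sum_erase_add S v hi₀]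
  have h2 : ∑ i ∈ S.erase i₀, v i = β * (S.erase i₀).card := by
    rw [Finset.sum_congr rfl
      (fun j hj => hothers j (Finset.mem_of_mem_erase hj) (Finset.ne_of_mem_erase hj))]
    simp [mul_comm]
  rw [h2, Finset.card_erase_of_mem hi₀, hmax]

private lemma comb {s : Finset ℕ} (β : ℕ) (v v' : ℕ → ℕ)
    (h1 : ∀ i ∈ s, v i < β → v' i = v i)
    (h1' : ∀ i ∈ s, v' i < β → v i = v' i)
    (h2 : ∀ i ∈ s, ∀ j ∈ s, i ≠ j → v i ≤ β ∨ v j ≤ β)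
    (h2' : ∀ i ∈ s, ∀ j ∈ s, i ≠ j → v' i ≤ β ∨ v' j ≤ β) :
    (∑ i ∈ s, v i) + s.sup v' = (∑ i ∈ s, v' i) + s.sup v := by
  classical
  set S := s.filter (fun i => β ≤ v i) with hSdef
  have hmem : ∀ i ∈ s, (β ≤ v i ↔ β ≤ v' i) := by
    intro i hi
    constructor
    · intro h; by_contra h'; push_neg at h'
      have := h1' i hi h'; omega
    · intro h; by_contra h'; push_neg at h'
      have := h1 i hi h'; omega
  have hsub : S ⊆ s := Finset.filter_subset _ _
  by_cases hS : S.Nonempty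
  · obtain ⟨i₀, hi₀⟩ := hS
    have hi₀s : i₀ ∈ s := hsub hi₀
    have hi₀v : β ≤ v i₀ := (Finset.mem_filter.1 hi₀).2
    have hi₀v' : β ≤ v' i₀ := (hmem i₀ hi₀s).1 hi₀v
    have hlow : ∀ i ∈ s \ S, v i < β ∧ v' i < β ∧ v i = v' i := by
      intro i hi
      rw [Finset.mem_sdiff] at hi
      have hv : v i < β := by
        by_contra h; push_neg at h
        exact hi.2 (Finset.mem_filter.2 ⟨hi.1, h⟩)
      have hv' : v' i < β := by
        by_contra h; push_neg at h
        exact absurd ((hmem i hi.1).2 h) (by omega)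
      exact ⟨hv, hv', (h1 i hi.1 hv).symm⟩
    have e1 : ∑ i ∈ s \ S, v i + ∑ i ∈ S, v i = ∑ i ∈ s, v i := Finset.sum_sdiff hsub
    have e2 : ∑ i ∈ s \ S, v' i + ∑ i ∈ S, v' i = ∑ i ∈ s, v' i := Finset.sum_sdiff hsub
    have e3 : ∑ i ∈ s \ S, v i = ∑ i ∈ s \ S, v' i :=
      Finset.sum_congr rfl (fun i hi => (hlow i hi).2.2)
    have e4 : ∑ i ∈ S, v i = β * (S.card - 1) + S.sup v :=
      sumS_eq ⟨i₀, hi₀⟩ β v (fun i hi => (Finset.mem_filter.1 hi).2)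
        (fun i hi j hj hij => h2 i (hsub hi) j (hsub hj) hij)
    have e5 : ∑ i ∈ S, v' i = β * (S.card - 1) + S.sup v' :=
      sumS_eq ⟨i₀, hi₀⟩ β v' (fun i hi => (hmem i (hsub hi)).1 (Finset.mem_filter.1 hi).2)
        (fun i hi j hj hij => h2' i (hsub hi) j (hsub hj) hij)
    have e6 : s.sup v = S.sup v := by
      apply le_antisymm
      · apply Finset.sup_le
        intro i hi
        by_cases h : i ∈ S
        · exact Finset.le_sup h
        · have := (hlow i (Finset.mem_sdiff.2 ⟨hi, h⟩)).1
          exact le_trans (by omega : v i ≤ β) (le_trans hi₀v (Finset.le_sup hi₀))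
      · exact Finset.sup_mono hsub
    have e7 : s.sup v' = S.sup v' := by
      apply le_antisymm
      · apply Finset.sup_le
        intro i hi
        by_cases h : i ∈ S
        · exact Finset.le_sup h
        · have := (hlow i (Finset.mem_sdiff.2 ⟨hi, h⟩)).2.1
          exact le_trans (by omega : v' i ≤ β) (le_trans hi₀v' (Finset.le_sup hi₀))
      · exact Finset.sup_mono hsub
    omega
  · have hempty : ∀ i ∈ s, v i < β := by
      intro i hi
      by_contra h; push_neg at h
      exact hS ⟨i, Finset.mem_filter.2 ⟨hi, h⟩⟩
    have heq : ∀ i ∈ s, v' i = v i := fun i hi => h1 i hi (hempty i hi)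
    rw [Finset.sum_congr rfl (fun i hi => (heq i hi).symm),
      Finset.sup_congr rfl heq]

private lemma pow_dvd_iff' (p : ℕ) (hp : p.Prime) {x : ℤ} (hx : x ≠ 0) (e : ℕ) :
    (p : ℤ)^e ∣ x ↔ e ≤ x.natAbs.factorization p := by
  rw [← Nat.cast_pow, Int.natCast_dvd,
    Nat.Prime.pow_dvd_iff_le_factorization hp (Int.natAbs_ne_zero.mpr hx)]

private lemma val_stable (p : ℕ) (hp : p.Prime) {x y M : ℤ} (hx : x ≠ 0) (hy : y ≠ 0)
    (hM : M ≠ 0) (hd : M ∣ y - x)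
    (h : x.natAbs.factorization p < M.natAbs.factorization p) :
    y.natAbs.factorization p = x.natAbs.factorization p := by
  set e := x.natAbs.factorization p with he
  have h1 : (p:ℤ)^e ∣ x := (pow_dvd_iff' p hp hx e).2 le_rfl
  have h2 : ¬ (p:ℤ)^(e+1) ∣ x := by rw [pow_dvd_iff' p hp hx]; omega
  have hpe : (p:ℤ)^(e+1) ∣ M := (pow_dvd_iff' p hp hM _).2 (by omega)
  have hdiff : (p:ℤ)^(e+1) ∣ y - x := hpe.trans hd
  have hy1 : (p:ℤ)^e ∣ y := by
    have hyx : y = (y - x) + x := by ring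
    rw [hyx]
    exact dvd_add ((pow_dvd_pow _ (Nat.le_succ e)).trans hdiff) h1
  have hy2 : ¬ (p:ℤ)^(e+1) ∣ y := by
    intro hc
    apply h2
    have hxy : x = y - (y - x) := by ring
    rw [hxy]
    exact dvd_sub hc hdiff
  rw [pow_dvd_iff' p hp hy] at hy1 hy2
  omega

private lemma lcm_fact (p : ℕ) (g : ℕ → ℤ) (s : Finset ℕ) :
    (∀ i ∈ s, g i ≠ 0) →
    (s.lcm g).natAbs.factorization p = s.sup fun i => (g i).natAbs.factorization p := by
  classical
  induction s using Finset.induction_on with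
  | empty => intro _; simp
  | insert a s ha ih =>
    intro hg
    have hga : g a ≠ 0 := hg a (mem_insert_self _ _)
    have hgs : ∀ i ∈ s, g i ≠ 0 := fun i hi => hg i (mem_insert_of_mem hi)
    have hs0 : s.lcm g ≠ 0 := by
      intro h
      rw [Finset.lcm_eq_zero_iff] at h
      obtain ⟨i, hi, h0⟩ := h
      exact hgs i (Finset.mem_coe.mp hi) h0
    rw [Finset.lcm_insert, Finset.sup_insert, Int.natAbs_lcm, Int.lcm_def,
      Nat.factorization_lcm (Int.natAbs_ne_zero.mpr hga) (Int.natAbs_ne_zero.mpr hs0),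
      Finsupp.sup_apply, ih hgs]

private lemma lcm_nonneg' (g : ℕ → ℤ) (s : Finset ℕ) : 0 ≤ s.lcm g := by
  have h := Finset.normalize_lcm (s := s) (f := g)
  rw [← h]
  exact Int.nonneg_of_normalize_eq_self (by simp)

private lemma keylem (a b c : ℤ) (k : ℕ) (m : ℤ) {i j : ℕ} (hij : i < j) (hj : j ≤ k)
    (x : ℤ) (h1 : x ∣ (a*(m+i)^2+b*(m+i)+c)) (h2 : x ∣ (a*(m+j)^2+b*(m+j)+c)) :
    x ∣ (Finset.Icc 1 k).lcm
      (fun i : ℕ => (i : ℤ) * (a^2 * (i : ℤ)^2 - (b^2 - 4*a*c))) := by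
  set d := j - i with hd
  have hdm : d ∈ Finset.Icc 1 k := Finset.mem_Icc.2 ⟨by omega, by omega⟩
  refine dvd_trans ?_
    (Finset.dvd_lcm (f := fun i : ℕ => (i : ℤ) * (a^2 * (i : ℤ)^2 - (b^2 - 4*a*c))) hdm)
  have hcast : (j : ℤ) = (i : ℤ) + (d : ℤ) := by push_cast [hd]; omega
  have key : (d : ℤ) * (a^2 * (d:ℤ)^2 - (b^2 - 4*a*c)) =
      (4*a*(d:ℤ)) * (a*(m+i)^2+b*(m+i)+c)
      + (a*(d:ℤ) - 2*a*(m+i) - b) *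
        ((a*(m+j)^2+b*(m+j)+c) - (a*(m+i)^2+b*(m+i)+c)) := by
    rw [hcast]; ring
  show x ∣ (d:ℤ) * (a^2 * (d:ℤ)^2 - (b^2 - 4*a*c))
  rw [key]
  exact dvd_add (Dvd.dvd.mul_left h1 _) (Dvd.dvd.mul_left (dvd_sub h2 h1) _)

private theorem main_aux (s : Finset ℕ) (F F' : ℕ → ℤ) (B : ℤ) (hB : B ≠ 0)
    (hFnz : ∀ i ∈ s, F i ≠ 0)
    (hF'nz : ∀ i ∈ s, F' i ≠ 0)
    (hdiff : ∀ i ∈ s, B ∣ F' i - F i)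
    (hkey : ∀ i ∈ s, ∀ j ∈ s, i ≠ j → ∀ x : ℤ, x ∣ F i → x ∣ F j → x ∣ B)
    (hkey' : ∀ i ∈ s, ∀ j ∈ s, i ≠ j → ∀ x : ℤ, x ∣ F' i → x ∣ F' j → x ∣ B) :
    (∏ i ∈ s, |F' i|) / s.lcm F' = (∏ i ∈ s, |F i|) / s.lcm F := by
  classical
  set L := s.lcm F with hLdef
  set L' := s.lcm F' with hL'def
  have hL0 : L ≠ 0 := by
    intro h; rw [hLdef, Finset.lcm_eq_zero_iff] at h
    obtain ⟨i, hi, h0⟩ := h; exact hFnz i (Finset.mem_coe.mp hi) h0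
  have hL'0 : L' ≠ 0 := by
    intro h; rw [hL'def, Finset.lcm_eq_zero_iff] at h
    obtain ⟨i, hi, h0⟩ := h; exact hF'nz i (Finset.mem_coe.mp hi) h0
  have hLnn : 0 ≤ L := lcm_nonneg' F s
  have hL'nn : 0 ≤ L' := lcm_nonneg' F' s
  have hAcast : (∏ i ∈ s, |F i|) = ((∏ i ∈ s, (F i).natAbs : ℕ) : ℤ) := by
    rw [Nat.cast_prod]; exact Finset.prod_congr rfl fun i _ => (Int.natCast_natAbs _).symm
  have hA'cast : (∏ i ∈ s, |F' i|) = ((∏ i ∈ s, (F' i).natAbs : ℕ) : ℤ) := by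
    rw [Nat.cast_prod]; exact Finset.prod_congr rfl fun i _ => (Int.natCast_natAbs _).symm
  have hLdvd : L ∣ ∏ i ∈ s, |F i| := by
    rw [← Finset.abs_prod]
    exact (dvd_abs _ _).mpr (Finset.lcm_dvd fun i hi => Finset.dvd_prod_of_mem F hi)
  have hL'dvd : L' ∣ ∏ i ∈ s, |F' i| := by
    rw [← Finset.abs_prod]
    exact (dvd_abs _ _).mpr (Finset.lcm_dvd fun i hi => Finset.dvd_prod_of_mem F' hi)
  obtain ⟨q, hq⟩ := hLdvd
  obtain ⟨q', hq'⟩ := hL'dvd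
  have hP0 : (∏ i ∈ s, (F i).natAbs) ≠ 0 :=
    Finset.prod_ne_zero_iff.mpr fun i hi => Int.natAbs_ne_zero.mpr (hFnz i hi)
  have hP'0 : (∏ i ∈ s, (F' i).natAbs) ≠ 0 :=
    Finset.prod_ne_zero_iff.mpr fun i hi => Int.natAbs_ne_zero.mpr (hF'nz i hi)
  have hNA : (∏ i ∈ s, (F i).natAbs) * L'.natAbs = (∏ i ∈ s, (F' i).natAbs) * L.natAbs := by
    apply Nat.eq_of_factorization_eq
      (Nat.mul_ne_zero hP0 (Int.natAbs_ne_zero.mpr hL'0))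
      (Nat.mul_ne_zero hP'0 (Int.natAbs_ne_zero.mpr hL0))
    intro p
    by_cases hp : p.Prime
    · rw [Nat.factorization_mul hP0 (Int.natAbs_ne_zero.mpr hL'0),
        Nat.factorization_mul hP'0 (Int.natAbs_ne_zero.mpr hL0)]
      simp only [Finsupp.add_apply]
      rw [Nat.factorization_prod (fun i hi => Int.natAbs_ne_zero.mpr (hFnz i hi)),
        Nat.factorization_prod (fun i hi => Int.natAbs_ne_zero.mpr (hF'nz i hi))]
      simp only [Finset.sum_apply']
      rw [hLdef, hL'def, lcm_fact p F s hFnz, lcm_fact p F' s hF'nz]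
      set β := B.natAbs.factorization p with hβ
      exact comb β _ _
        (fun i hi hlt => val_stable p hp (hFnz i hi) (hF'nz i hi) hB (hdiff i hi) hlt)
        (fun i hi hlt => val_stable p hp (hF'nz i hi) (hFnz i hi) hB
          (dvd_sub_comm.mp (hdiff i hi)) hlt)
        (fun i hi j hj hij => by
          by_contra hcon; push_neg at hcon
          obtain ⟨hi', hj'⟩ := hcon
          have d1 : (p:ℤ)^(β+1) ∣ F i := (pow_dvd_iff' p hp (hFnz i hi) _).2 (by omega)
          have d2 : (p:ℤ)^(β+1) ∣ F j := (pow_dvd_iff' p hp (hFnz j hj) _).2 (by omega)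
          have hd := hkey i hi j hj hij _ d1 d2
          rw [pow_dvd_iff' p hp hB] at hd; omega)
        (fun i hi j hj hij => by
          by_contra hcon; push_neg at hcon
          obtain ⟨hi', hj'⟩ := hcon
          have d1 : (p:ℤ)^(β+1) ∣ F' i := (pow_dvd_iff' p hp (hF'nz i hi) _).2 (by omega)
          have d2 : (p:ℤ)^(β+1) ∣ F' j := (pow_dvd_iff' p hp (hF'nz j hj) _).2 (by omega)
          have hd := hkey' i hi j hj hij _ d1 d2
          rw [pow_dvd_iff' p hp hB] at hd; omega)
    · simp [Nat.factorization_eq_zero_of_not_prime _ hp]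
  have hZ : (∏ i ∈ s, |F i|) * L' = (∏ i ∈ s, |F' i|) * L := by
    rw [hAcast, hA'cast, ← Int.natAbs_of_nonneg hLnn, ← Int.natAbs_of_nonneg hL'nn]
    exact_mod_cast hNA
  rw [hq, hq'] at hZ
  rw [hq, hq', Int.mul_ediv_cancel_left _ hL'0, Int.mul_ediv_cancel_left _ hL0]
  exact mul_left_cancel₀ (mul_ne_zero hL0 hL'0) (by linear_combination -hZ)

/-- For primitive quadratic `f(x) = ax² + bx + c` (a ≥ 1) with `D = b² - 4ac ≠ a²i²`
for all `1 ≤ i ≤ k`, and `B_k = lcm_{1 ≤ i ≤ k}{i(a²i² - D)}`, the function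
`g_{k,f}(n) = (∏_{i=0}^k |f(n+i)|)/lcm_{0≤i≤k} f(n+i)` satisfies
`g_{k,f}(n + B_k) = g_{k,f}(n)` wherever both sides are defined:
`g_{k,f}` is eventually periodic with period `B_k`. -/
theorem g_periodic_Bk (a b c : ℤ) (ha : 1 ≤ a)
    (hprim : Int.gcd a (Int.gcd b c) = 1)
    (k : ℕ) (hk : 1 ≤ k)
    (hD : ∀ i : ℕ, 1 ≤ i → i ≤ k → b^2 - 4*a*c ≠ a^2 * (i : ℤ)^2)
    (n : ℤ) (hn : 1 ≤ n)
    (hnz : ∀ i : ℕ, i ≤ k → a*(n+i)^2 + b*(n+i) + c ≠ 0)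
    (hnz' : ∀ i : ℕ, i ≤ k →
      a*(n + (Finset.Icc 1 k).lcm
          (fun i : ℕ => (i : ℤ) * (a^2 * (i : ℤ)^2 - (b^2 - 4*a*c))) + i)^2
        + b*(n + (Finset.Icc 1 k).lcm
          (fun i : ℕ => (i : ℤ) * (a^2 * (i : ℤ)^2 - (b^2 - 4*a*c))) + i) + c ≠ 0) :
    (∏ i ∈ Finset.range (k+1),
        |a*(n + (Finset.Icc 1 k).lcm
            (fun i : ℕ => (i : ℤ) * (a^2 * (i : ℤ)^2 - (b^2 - 4*a*c))) + i)^2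
          + b*(n + (Finset.Icc 1 k).lcm
            (fun i : ℕ => (i : ℤ) * (a^2 * (i : ℤ)^2 - (b^2 - 4*a*c))) + i) + c|) /
      (Finset.range (k+1)).lcm (fun i : ℕ =>
        a*(n + (Finset.Icc 1 k).lcm
            (fun i : ℕ => (i : ℤ) * (a^2 * (i : ℤ)^2 - (b^2 - 4*a*c))) + i)^2
          + b*(n + (Finset.Icc 1 k).lcm
            (fun i : ℕ => (i : ℤ) * (a^2 * (i : ℤ)^2 - (b^2 - 4*a*c))) + i) + c)
    = (∏ i ∈ Finset.range (k+1), |a*(n+i)^2 + b*(n+i) + c|) /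
        (Finset.range (k+1)).lcm (fun i : ℕ => a*(n+i)^2 + b*(n+i) + c) := by
  set B : ℤ := (Finset.Icc 1 k).lcm
      (fun i : ℕ => (i : ℤ) * (a^2 * (i : ℤ)^2 - (b^2 - 4*a*c))) with hBdef
  have hB : B ≠ 0 := by
    rw [hBdef]
    intro h
    rw [Finset.lcm_eq_zero_iff] at h
    obtain ⟨i, hi, h0⟩ := h
    rw [Finset.mem_Icc] at hi
    rcases mul_eq_zero.mp h0 with h1 | h1
    · have : i = 0 := Nat.cast_eq_zero.mp h1
      omega
    · exact hD i hi.1 hi.2 (sub_eq_zero.mp h1).symm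
  have hFnz : ∀ i ∈ Finset.range (k+1),
      (fun i : ℕ => a*(n+i)^2 + b*(n+i) + c) i ≠ 0 := by
    intro i hi
    exact hnz i (by rw [Finset.mem_range] at hi; omega)
  have hF'nz : ∀ i ∈ Finset.range (k+1),
      (fun i : ℕ => a*(n + B + i)^2 + b*(n + B + i) + c) i ≠ 0 := by
    intro i hi
    exact hnz' i (by rw [Finset.mem_range] at hi; omega)
  have hdiff : ∀ i ∈ Finset.range (k+1),
      B ∣ (a*(n + B + i)^2 + b*(n + B + i) + c) - (a*(n+i)^2 + b*(n+i) + c) := by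
    intro i _
    exact ⟨2*a*(n+i) + b + a*B, by ring⟩
  have hkey : ∀ i ∈ Finset.range (k+1), ∀ j ∈ Finset.range (k+1), i ≠ j →
      ∀ x : ℤ, x ∣ (a*(n+i)^2 + b*(n+i) + c) → x ∣ (a*(n+j)^2 + b*(n+j) + c) → x ∣ B := by
    intro i hi j hj hij x h1 h2
    rw [Finset.mem_range] at hi hj
    rw [hBdef]
    rcases lt_or_gt_of_ne hij with h | h
    · exact keylem a b c k n h (by omega) x h1 h2
    · exact keylem a b c k n h (by omega) x h2 h1
  have hkey' : ∀ i ∈ Finset.range (k+1), ∀ j ∈ Finset.range (k+1), i ≠ j →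
      ∀ x : ℤ, x ∣ (a*(n + B + i)^2 + b*(n + B + i) + c) →
        x ∣ (a*(n + B + j)^2 + b*(n + B + j) + c) → x ∣ B := by
    intro i hi j hj hij x h1 h2
    rw [Finset.mem_range] at hi hj
    rw [hBdef]
    rcases lt_or_gt_of_ne hij with h | h
    · exact keylem a b c k (n + B) h (by omega) x h1 h2
    · exact keylem a b c k (n + B) h (by omega) x h2 h1
  exact main_aux (Finset.range (k+1))
    (fun i : ℕ => a*(n+i)^2 + b*(n+i) + c)
    (fun i : ℕ => a*(n + B + i)^2 + b*(n + B + i) + c)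
    B hB hFnz hF'nz hdiff hkey hkey'
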